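/- For every x ∈ M, the complement M \ N⁺(x) of the future null cone of x is open in the Zeeman topology Z, and likewise M \ N⁻(x) is open in Z. Consequently the interval topology T_→ induced by the horismos relation is contained in Z. -/

import Mathlib

open Set Metric TopologicalSpace Topology

noncomputable section

/-- Minkowski space `M = ℝ⁴` with the Euclidean metric/topology. -/
abbrev M4 : Type := EuclideanSpace ℝ (Fin 4)

/-- The Minkowski quadratic form `Q(x) = x₀² − x₁² − x₂² − x₃²`. -/
def Q (x : M4) : ℝ := x 0 ^ 2 - x 1 ^ 2 - x 2 ^ 2 - x 3 ^ 2

/-- Chronological order: `x ≪ y`. -/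
def chron (x y : M4) : Prop := Q (y - x) > 0 ∧ x 0 < y 0

/-- Causal order: `x ≺ y`. -/
def causal (x y : M4) : Prop := Q (y - x) ≥ 0 ∧ x 0 ≤ y 0

/-- Horismos: `x → y`. -/
def horismos (x y : M4) : Prop := Q (y - x) = 0 ∧ x ≠ y ∧ x 0 < y 0

/-- The light cone `N(x) = N⁺(x) ∪ N⁻(x)`. -/
def lightCone (x : M4) : Set M4 := {y | horismos x y} ∪ {y | horismos y x}

/-- The Zeeman topology `Z`, generated by the sets `Z_ε(x) = (B_ε(x) \ N(x)) ∪ {x}`. -/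
def Zeeman : TopologicalSpace M4 :=
  TopologicalSpace.generateFrom
    {S | ∃ (x : M4) (ε : ℝ), 0 < ε ∧ S = (Metric.ball x ε \ lightCone x) ∪ {x}}

/-- The interval topology `T_R` of a relation `R`, generated by the subbasis of
complements of the sets `R⁺(x) = {y | R x y}` and `R⁻(x) = {y | R y x}`. -/
def intervalTopology (R : M4 → M4 → Prop) : TopologicalSpace M4 :=
  TopologicalSpace.generateFrom
    ({S | ∃ x : M4, S = {y | R x y}ᶜ} ∪ {S | ∃ x : M4, S = {y | R y x}ᶜ})
lemma contQ : Continuous Q := by unfold Q; fun_prop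

lemma Qzero (v : M4) (h : Q v = 0) (h0 : v 0 = 0) : v = 0 := by
  unfold Q at h
  rw [h0] at h
  have h1 : v 1 = 0 := by nlinarith [sq_nonneg (v 1), sq_nonneg (v 2), sq_nonneg (v 3)]
  have h2 : v 2 = 0 := by nlinarith [sq_nonneg (v 1), sq_nonneg (v 2), sq_nonneg (v 3)]
  have h3 : v 3 = 0 := by nlinarith [sq_nonneg (v 1), sq_nonneg (v 2), sq_nonneg (v 3)]
  ext i
  fin_cases i <;> simp [h0, h1, h2, h3]

lemma cont_coord (i : Fin 4) : Continuous (fun z : M4 => z i) := by fun_prop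

/-- Generic: a set every point of which has a basic Zeeman set inside is Zeeman-open. -/
lemma zeeman_open_of_basic (S : Set M4)
    (h : ∀ y ∈ S, ∃ T, (∃ (x : M4) (ε : ℝ), 0 < ε ∧
        T = (Metric.ball x ε \ lightCone x) ∪ {x}) ∧ y ∈ T ∧ T ⊆ S) :
    IsOpen[Zeeman] S := by
  have hS : S = ⋃₀ {T | (∃ (x : M4) (ε : ℝ), 0 < ε ∧
      T = (Metric.ball x ε \ lightCone x) ∪ {x}) ∧ T ⊆ S} := by
    apply Subset.antisymm
    · intro y hy
      obtain ⟨T, hT, hyT, hTS⟩ := h y hy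
      exact ⟨T, ⟨hT, hTS⟩, hyT⟩
    · rintro y ⟨T, ⟨_, hTS⟩, hyT⟩
      exact hTS hyT
  rw [hS]
  apply TopologicalSpace.GenerateOpen.sUnion
  rintro T ⟨hT, -⟩
  exact TopologicalSpace.GenerateOpen.basic T hT

lemma closed_future (x : M4) : IsClosed {z : M4 | Q (z - x) = 0 ∧ x 0 ≤ z 0} := by
  apply IsClosed.inter
  · exact isClosed_eq (contQ.comp (continuous_id.sub continuous_const)) continuous_const
  · exact isClosed_le continuous_const (cont_coord 0)

lemma closed_past (x : M4) : IsClosed {z : M4 | Q (x - z) = 0 ∧ z 0 ≤ x 0} := by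
  apply IsClosed.inter
  · exact isClosed_eq (contQ.comp (continuous_const.sub continuous_id)) continuous_const
  · exact isClosed_le (cont_coord 0) continuous_const

lemma future_open (x : M4) : IsOpen[Zeeman] {y | horismos x y}ᶜ := by
  apply zeeman_open_of_basic
  intro y hy
  by_cases hxy : y = x
  · refine ⟨(Metric.ball x 1 \ lightCone x) ∪ {x}, ⟨x, 1, one_pos, rfl⟩, ?_, ?_⟩
    · right; simp [hxy]
    · rintro z (⟨-, hz⟩ | hz)
      · intro hc; exact hz (Or.inl hc)
      · simp only [mem_singleton_iff] at hz
        subst hz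
        rintro ⟨-, hne, -⟩
        exact hne rfl
  · -- y ≠ x, y not in future cone: y is outside the closed set C
    have hyC : y ∉ {z : M4 | Q (z - x) = 0 ∧ x 0 ≤ z 0} := by
      rintro ⟨hQ, hle⟩
      rcases lt_or_eq_of_le hle with hlt | heq
      · exact hy ⟨hQ, fun h => hxy h.symm, hlt⟩
      · have : y - x = 0 := by
          apply Qzero _ hQ
          simp [← heq]
        exact hxy (by rwa [sub_eq_zero] at this)
    have : {z : M4 | Q (z - x) = 0 ∧ x 0 ≤ z 0}ᶜ ∈ nhds y :=
      (closed_future x).isOpen_compl.mem_nhds hyC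
    obtain ⟨ε, hε, hball⟩ := Metric.mem_nhds_iff.mp this
    refine ⟨(Metric.ball y ε \ lightCone y) ∪ {y}, ⟨y, ε, hε, rfl⟩, ?_, ?_⟩
    · right; rfl
    · rintro z (⟨hz, -⟩ | hz)
      · intro hc
        exact hball hz ⟨hc.1, le_of_lt hc.2.2⟩
      · simp only [mem_singleton_iff] at hz
        subst hz; exact hy

lemma past_open (x : M4) : IsOpen[Zeeman] {y | horismos y x}ᶜ := by
  apply zeeman_open_of_basic
  intro y hy
  by_cases hxy : y = x
  · refine ⟨(Metric.ball x 1 \ lightCone x) ∪ {x}, ⟨x, 1, one_pos, rfl⟩, ?_, ?_⟩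
    · right; simp [hxy]
    · rintro z (⟨-, hz⟩ | hz)
      · intro hc; exact hz (Or.inr hc)
      · simp only [mem_singleton_iff] at hz
        subst hz
        rintro ⟨-, hne, -⟩
        exact hne rfl
  · have hyC : y ∉ {z : M4 | Q (x - z) = 0 ∧ z 0 ≤ x 0} := by
      rintro ⟨hQ, hle⟩
      rcases lt_or_eq_of_le hle with hlt | heq
      · exact hy ⟨hQ, hxy, hlt⟩
      · have : x - y = 0 := by
          apply Qzero _ hQ
          simp [heq]
        exact hxy (by rw [sub_eq_zero] at this; exact this.symm)
    have : {z : M4 | Q (x - z) = 0 ∧ z 0 ≤ x 0}ᶜ ∈ nhds y :=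
      (closed_past x).isOpen_compl.mem_nhds hyC
    obtain ⟨ε, hε, hball⟩ := Metric.mem_nhds_iff.mp this
    refine ⟨(Metric.ball y ε \ lightCone y) ∪ {y}, ⟨y, ε, hε, rfl⟩, ?_, ?_⟩
    · right; rfl
    · rintro z (⟨hz, -⟩ | hz)
      · intro hc
        exact hball hz ⟨hc.1, le_of_lt hc.2.2⟩
      · simp only [mem_singleton_iff] at hz
        subst hz; exact hy

/-- The complements of the future and past null cones are Zeeman-open, hence the
interval topology from horismos is contained in the Zeeman topology. -/
theorem nullcone_complements_Zeeman_open_and_interval_subset :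
    (∀ x : M4, IsOpen[Zeeman] {y | horismos x y}ᶜ) ∧
    (∀ x : M4, IsOpen[Zeeman] {y | horismos y x}ᶜ) ∧
    (∀ s : Set M4, IsOpen[intervalTopology horismos] s → IsOpen[Zeeman] s) := by
  refine ⟨future_open, past_open, ?_⟩
  have hle : Zeeman ≤ intervalTopology horismos := by
    apply le_generateFrom
    rintro S (⟨x, rfl⟩ | ⟨x, rfl⟩)
    · exact future_open x
    · exact past_open x
  intro s hs
  exact hle s hs
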